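/- Let M be an irreducible Markov chain on a countable state space V and let A ⊆ W be a tail event. Then the function h : V → [0,1] defined by h(z) = μ_z(A) is a sharp harmonic function. -/

import Mathlib

open MeasureTheory Filter Set Topology
open scoped Classical

/-- An irreducible Markov chain on a countable state space `V`, given together with
its family of path-space laws `μ z` (the law of the chain started at `z`),
characterised on cylinder sets by the transition probabilities. -/
structure MarkovChain (V : Type*) [Countable V] [MeasurableSpace V] where
  /-- transition probabilities -/
  p : V → V → ℝ
  p_nonneg : ∀ x y, 0 ≤ p x y
  p_row_sum : ∀ x, HasSum (p x) 1
  irred : ∀ x y : V, ∃ (n : ℕ) (w : ℕ → V),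
    w 0 = x ∧ w n = y ∧ ∀ i < n, 0 < p (w i) (w (i + 1))
  /-- the law of the chain started at `z`, on the path space `ℕ → V` -/
  μ : V → Measure (ℕ → V)
  μ_prob : ∀ z, IsProbabilityMeasure (μ z)
  μ_cyl : ∀ (z : V) (n : ℕ) (w : ℕ → V),
    (μ z {ω : ℕ → V | ∀ i ≤ n, ω i = w i}).toReal =
      if w 0 = z then ∏ i ∈ Finset.range n, p (w i) (w (i + 1)) else 0

variable {V : Type*} [Countable V] [MeasurableSpace V]

/-- `h : V → ℝ` is harmonic if `h x = ∑_y p x y * h y` for every `x`. -/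
def IsHarmonic (M : MarkovChain V) (h : V → ℝ) : Prop :=
  ∀ x, HasSum (fun y => M.p x y * h y) (h x)

/-- The event `1^s` that the values of `s` along the trajectory converge to `1`. -/
def oneEvent (s : V → ℝ) : Set (ℕ → V) :=
  {ω | Tendsto (fun n => s (ω n)) atTop (𝓝 1)}

/-- The event `0^s` that the values of `s` along the trajectory converge to `0`. -/
def zeroEvent (s : V → ℝ) : Set (ℕ → V) :=
  {ω | Tendsto (fun n => s (ω n)) atTop (𝓝 0)}

/-- A harmonic function `s : V → [0,1]` is sharp if, for every starting state,
the values of `s` along the trajectory of the chain converge to `0` or `1`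
almost surely. -/
def IsSharp (M : MarkovChain V) (s : V → ℝ) : Prop :=
  IsHarmonic M s ∧ (∀ x, s x ∈ Set.Icc (0 : ℝ) 1) ∧
  ∀ z, ∀ᵐ ω ∂ M.μ z,
    Tendsto (fun n => s (ω n)) atTop (𝓝 0) ∨ Tendsto (fun n => s (ω n)) atTop (𝓝 1)

/-- A tail event: a measurable event invariant under deleting the first step. -/
def IsTailEvent (A : Set (ℕ → V)) : Prop :=
  MeasurableSet A ∧ (fun ω : ℕ → V => fun n => ω (n + 1)) ⁻¹' A = A

/-- An `M`-boundary: a measurable space `N` with measures `ν z`, `z ∈ V`, and a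
measurable, shift-invariant, measure-preserving map `f` from path space to `N`. -/
structure MBoundary (M : MarkovChain V) (N : Type*) [MeasurableSpace N] where
  ν : V → Measure N
  f : (ℕ → V) → N
  f_meas : Measurable f
  shift_inv : ∀ ω : ℕ → V, f (fun n => ω (n + 1)) = f ω
  meas_pres : ∀ (z : V) (X : Set N), MeasurableSet X → ν z X = M.μ z (f ⁻¹' X)

/-- The `M`-boundary is faithful to a sharp harmonic function `s` if some measurable
`X ⊆ N` satisfies `μ_z (1^s △ f⁻¹ X) = 0` for every `z`. -/
def Faithful {N : Type*} [MeasurableSpace N] (M : MarkovChain V) (B : MBoundary M N)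
    (s : V → ℝ) : Prop :=
  ∃ X : Set N, MeasurableSet X ∧ ∀ z, M.μ z (symmDiff (oneEvent s) (B.f ⁻¹' X)) = 0

/-- The `M`-boundary is a realisation of the Poisson boundary: every bounded harmonic
function is the integral of an essentially unique bounded measurable function on `N`,
and conversely integrating any bounded measurable function on `N` gives a bounded
harmonic function. -/
def IsRealisation {N : Type*} [MeasurableSpace N] (M : MarkovChain V)
    (B : MBoundary M N) : Prop :=
  (∀ h : V → ℝ, IsHarmonic M h → (∃ C, ∀ x, |h x| ≤ C) →
    ∃ hhat : N → ℝ, Measurable hhat ∧ (∃ C, ∀ η, |hhat η| ≤ C) ∧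
      (∀ z, h z = ∫ η, hhat η ∂ B.ν z) ∧
      (∀ g : N → ℝ, Measurable g → (∃ C, ∀ η, |g η| ≤ C) →
        (∀ z, h z = ∫ η, g η ∂ B.ν z) → ∀ z, hhat =ᵐ[B.ν z] g)) ∧
  (∀ g : N → ℝ, Measurable g → (∃ C, ∀ η, |g η| ≤ C) →
    (∃ C, ∀ z, |∫ η, g η ∂ B.ν z| ≤ C) ∧ IsHarmonic M (fun z => ∫ η, g η ∂ B.ν z))

section AuxLemmas
set_option linter.unusedSectionVars false

/-- Cylinder sets. -/
def Cyl (n : ℕ) (w : ℕ → V) : Set (ℕ → V) := {ω | ∀ i ≤ n, ω i = w i}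

/-- Shift by `n`. -/
def shifts (n : ℕ) : (ℕ → V) → (ℕ → V) := fun ω k => ω (k + n)

lemma measurable_shifts (n : ℕ) : Measurable (shifts (V := V) n) :=
  measurable_pi_lambda _ fun k => measurable_pi_apply (k + n)

/-- If `t` fixes every measurable subset of `V`, then the coordinatewise map fixes every
measurable subset of path space. -/
lemma invariant_of_fixes {t : V → V} (htS : ∀ S : Set V, MeasurableSet S → t ⁻¹' S = S)
    (S : Set (ℕ → V)) (hS : MeasurableSet S) : (fun ω : ℕ → V => t ∘ ω) ⁻¹' S = S := by
  let m' : MeasurableSpace (ℕ → V) :=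
    { MeasurableSet' := fun S => MeasurableSet S ∧ (fun ω : ℕ → V => t ∘ ω) ⁻¹' S = S
      measurableSet_empty := ⟨MeasurableSet.empty, by simp⟩
      measurableSet_compl := fun S hS => ⟨hS.1.compl, by rw [Set.preimage_compl, hS.2]⟩
      measurableSet_iUnion := fun f hf =>
        ⟨MeasurableSet.iUnion fun i => (hf i).1, by
          simp only [preimage_iUnion]
          exact iUnion_congr fun i => (hf i).2⟩ }
  have hmeas : @Measurable _ _ m' MeasurableSpace.pi (id : (ℕ → V) → (ℕ → V)) := by
    apply measurable_pi_iff.mpr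
    intro i B hB
    refine ⟨measurable_pi_apply i hB, ?_⟩
    have h2 : (fun ω : ℕ → V => t ∘ ω) ⁻¹' ((fun ω : ℕ → V => ω i) ⁻¹' B)
        = (fun ω : ℕ → V => ω i) ⁻¹' (t ⁻¹' B) := rfl
    rw [show (fun ω : ℕ → V => id ω i) ⁻¹' B = (fun ω : ℕ → V => ω i) ⁻¹' B from rfl,
      h2, htS B hB]
  exact (hmeas hS).2

/-- If a Markov chain exists on `V`, then every subset of `V` is measurable. -/
lemma mc_discrete (M : MarkovChain V) (s : Set V) : MeasurableSet s := by
  have hsep : ∀ x y : V, x ≠ y → ∃ S : Set V, MeasurableSet S ∧ x ∈ S ∧ y ∉ S := by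
    intro x y hxy
    by_contra hcon
    push_neg at hcon
    have hio : ∀ S : Set V, MeasurableSet S → (x ∈ S ↔ y ∈ S) := by
      intro S hS
      constructor
      · intro hx; exact hcon S hS hx
      · intro hy
        by_contra hx
        exact (hcon Sᶜ hS.compl hx) hy
    obtain ⟨t, ht⟩ : ∃ t : V → V, t = fun v => Equiv.swap x y v := ⟨_, rfl⟩
    have htS : ∀ S : Set V, MeasurableSet S → t ⁻¹' S = S := by
      intro S hS
      ext v
      rcases eq_or_ne v x with rfl | hvx
      · simp only [mem_preimage, ht, Equiv.swap_apply_left]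
        exact ((hio S hS).symm)
      rcases eq_or_ne v y with rfl | hvy
      · simp only [mem_preimage, ht, Equiv.swap_apply_right]
        exact (hio S hS)
      · simp [ht, Equiv.swap_apply_of_ne_of_ne hvx hvy]
    obtain ⟨T, hT⟩ : ∃ T : (ℕ → V) → (ℕ → V), T = fun ω => t ∘ ω := ⟨_, rfl⟩
    have hinv : ∀ S : Set (ℕ → V), MeasurableSet S → T ⁻¹' S = S := by
      intro S hS
      rw [hT]
      exact invariant_of_fixes htS S hS
    -- now p x v = 0 for all v
    have hpx : ∀ v, M.p x v = 0 := by
      intro v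
      have hprob := M.μ_prob x
      -- the cylinder starting at y through t v is null for μ x
      obtain ⟨w', hw'⟩ : ∃ w' : ℕ → V, w' = fun k => if k = 0 then y else t v := ⟨_, rfl⟩
      have h0 : M.μ x (Cyl 1 w') = 0 := by
        have h1 := M.μ_cyl x 1 w'
        have : (M.μ x (Cyl 1 w')).toReal = 0 := by
          rw [show Cyl 1 w' = {ω : ℕ → V | ∀ i ≤ 1, ω i = w' i} from rfl, h1]
          simp [hw', hxy.symm]
        have hne : M.μ x (Cyl 1 w') ≠ ⊤ := measure_ne_top _ _
        exact (ENNReal.toReal_eq_zero_iff _).1 this |>.resolve_right hne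
      have hex : ∃ H, Cyl 1 w' ⊆ H ∧ MeasurableSet H ∧ M.μ x H = 0 :=
        ⟨toMeasurable (M.μ x) (Cyl 1 w'), subset_toMeasurable _ _,
          measurableSet_toMeasurable _ _, by rw [measure_toMeasurable]; exact h0⟩
      obtain ⟨H, hsub, hHm, hH0⟩ := hex
      obtain ⟨w, hww⟩ : ∃ w : ℕ → V, w = fun k => if k = 0 then x else v := ⟨_, rfl⟩
      have hsub2 : Cyl 1 w ⊆ H := by
        intro ω hω
        have h00 : ω 0 = x := by simpa [hww] using hω 0 (by norm_num)
        have h01 : ω 1 = v := by simpa [hww] using hω 1 le_rfl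
        have hTω : T ω ∈ H := by
          apply hsub
          intro i hi
          have hi2 : i = 0 ∨ i = 1 := by omega
          rcases hi2 with rfl | rfl
          · show (T ω) 0 = w' 0
            rw [hT, hw']; simp [h00, ht]
          · show (T ω) 1 = w' 1
            rw [hT, hw']; simp [h01]
        have hmem : ω ∈ T ⁻¹' H := hTω
        rwa [hinv H hHm] at hmem
      have h0' : M.μ x (Cyl 1 w) = 0 := measure_mono_null hsub2 hH0
      have := M.μ_cyl x 1 w
      rw [show {ω : ℕ → V | ∀ i ≤ 1, ω i = w i} = Cyl 1 w from rfl, h0'] at this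
      simpa [hww] using this.symm
    have := M.p_row_sum x
    rw [show M.p x = (fun _ => (0:ℝ)) from funext hpx] at this
    exact zero_ne_one (hasSum_zero.unique this)
  -- separation gives measurable singletons, hence all sets measurable
  have hsingle : ∀ x : V, MeasurableSet ({x} : Set V) := by
    intro x
    have : ({x} : Set V) = ⋂ y : V, if h : y = x then univ else (hsep x y (Ne.symm h)).choose := by
      ext v
      simp only [mem_singleton_iff, mem_iInter]
      constructor
      · rintro rfl y
        split_ifs with h
        · exact mem_univ _
        · exact (hsep v y (Ne.symm h)).choose_spec.2.1
      · intro hv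
        by_contra hvx
        have := hv v
        rw [dif_neg hvx] at this
        exact (hsep x v (Ne.symm hvx)).choose_spec.2.2 this
    rw [this]
    refine MeasurableSet.iInter fun y => ?_
    split_ifs with h
    · exact MeasurableSet.univ
    · exact (hsep x y (Ne.symm h)).choose_spec.1
  have : MeasurableSingletonClass V := ⟨hsingle⟩
  exact (Set.to_countable s).measurableSet

lemma measurableSet_cyl (hV : ∀ s : Set V, MeasurableSet s) (n : ℕ) (w : ℕ → V) :
    MeasurableSet (Cyl n w) := by
  have h : Cyl n w = ⋂ i, ⋂ (_ : i ≤ n), (fun ω : ℕ → V => ω i) ⁻¹' {w i} := by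
    ext ω; simp [Cyl]
  rw [h]
  exact MeasurableSet.iInter fun i => MeasurableSet.iInter fun _ =>
    measurable_pi_apply i (hV {w i})

lemma measure_cyl (M : MarkovChain V) (z : V) (n : ℕ) (w : ℕ → V) :
    M.μ z (Cyl n w) = ENNReal.ofReal
      (if w 0 = z then ∏ i ∈ Finset.range n, M.p (w i) (w (i + 1)) else 0) := by
  haveI := M.μ_prob z
  have h := M.μ_cyl z n w
  rw [show {ω : ℕ → V | ∀ i ≤ n, ω i = w i} = Cyl n w from rfl] at h
  rw [← h, ENNReal.ofReal_toReal (measure_ne_top _ _)]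

/-- The collection of cylinder sets. -/
def cylSets (V : Type*) [Countable V] [MeasurableSpace V] : Set (Set (ℕ → V)) :=
  {S | ∃ n w, S = Cyl n w}

lemma isPiSystem_cylSets : IsPiSystem (cylSets V) := by
  rintro s ⟨n, w, rfl⟩ u ⟨m, w', rfl⟩ hne
  obtain ⟨ω, hω1, hω2⟩ := hne
  rcases le_total n m with h | h
  · have hsub : Cyl m w' ⊆ Cyl n w := by
      intro ρ hρ i hi
      rw [hρ i (hi.trans h), ← hω2 i (hi.trans h), hω1 i hi]
    rw [inter_eq_self_of_subset_right hsub]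
    exact ⟨m, w', rfl⟩
  · have hsub : Cyl n w ⊆ Cyl m w' := by
      intro ρ hρ i hi
      rw [hρ i (hi.trans h), ← hω1 i (hi.trans h), hω2 i hi]
    rw [inter_eq_self_of_subset_left hsub]
    exact ⟨n, w, rfl⟩

lemma pi_eq_generateFrom_cylSets (hV : ∀ s : Set V, MeasurableSet s) :
    (inferInstance : MeasurableSpace (ℕ → V)) = MeasurableSpace.generateFrom (cylSets V) := by
  refine le_antisymm ?_ (MeasurableSpace.generateFrom_le ?_)
  · have hmeas : @Measurable _ _ (MeasurableSpace.generateFrom (cylSets V)) MeasurableSpace.pi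
        (id : (ℕ → V) → (ℕ → V)) := by
      letI mG : MeasurableSpace (ℕ → V) := MeasurableSpace.generateFrom (cylSets V)
      apply measurable_pi_iff.mpr
      intro i B hB
      have hU : (fun ω : ℕ → V => id ω i) ⁻¹' B =
          ⋃ (b : Fin (i + 1) → V) (_ : b ⟨i, Nat.lt_succ_self i⟩ ∈ B),
            Cyl i (fun k => if h : k < i + 1 then b ⟨k, h⟩ else b ⟨i, Nat.lt_succ_self i⟩) := by
        ext ω
        simp only [mem_preimage, mem_iUnion, id]
        constructor
        · intro hω
          refine ⟨fun j => ω j, by simpa using hω, ?_⟩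
          intro k hk
          have hlt : k < i + 1 := Nat.lt_succ_of_le hk
          simp [hlt]
        · rintro ⟨b, hbB, hb⟩
          have hbi := hb i le_rfl
          have hlt : i < i + 1 := Nat.lt_succ_self i
          simp only [hlt, dif_pos] at hbi
          rwa [hbi]
      rw [hU]
      exact MeasurableSet.iUnion fun b => MeasurableSet.iUnion fun _ =>
        MeasurableSpace.measurableSet_generateFrom ⟨i, _, rfl⟩
    intro s hs
    have := hmeas hs
    simpa using this
  · rintro S ⟨n, w, rfl⟩
    exact measurableSet_cyl hV n w

lemma markov_key (M : MarkovChain V) (hV : ∀ s : Set V, MeasurableSet s) (z : V) (n : ℕ)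
    (w : ℕ → V) {B : Set (ℕ → V)} (hB : MeasurableSet B) :
    M.μ z (Cyl n w ∩ shifts n ⁻¹' B) = M.μ z (Cyl n w) * M.μ (w n) B := by
  haveI := M.μ_prob z
  haveI := M.μ_prob (w n)
  have hmap : ∀ X : Set (ℕ → V), MeasurableSet X →
      Measure.map (shifts n) ((M.μ z).restrict (Cyl n w)) X
        = M.μ z (Cyl n w ∩ shifts n ⁻¹' X) := by
    intro X hX
    rw [Measure.map_apply (measurable_shifts n) hX,
      Measure.restrict_apply (hX.preimage (measurable_shifts n)), inter_comm]
  haveI hfin1 : IsFiniteMeasure (Measure.map (shifts n) ((M.μ z).restrict (Cyl n w))) := by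
    constructor
    rw [hmap univ MeasurableSet.univ]
    exact lt_of_le_of_lt (measure_mono inter_subset_left) (measure_lt_top _ _)
  haveI hfin2 : IsFiniteMeasure (M.μ z (Cyl n w) • M.μ (w n)) := by
    constructor
    rw [Measure.smul_apply, smul_eq_mul, measure_univ, mul_one]
    exact measure_lt_top _ _
  have hext : Measure.map (shifts n) ((M.μ z).restrict (Cyl n w))
      = M.μ z (Cyl n w) • M.μ (w n) := by
    refine ext_of_generate_finite (cylSets V) (pi_eq_generateFrom_cylSets hV)
      isPiSystem_cylSets ?_ ?_
    · rintro S ⟨m, w', rfl⟩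
      rw [hmap _ (measurableSet_cyl hV m w'), Measure.smul_apply, smul_eq_mul]
      by_cases hcomp : w' 0 = w n
      · obtain ⟨w'', hw''⟩ : ∃ w'' : ℕ → V,
            w'' = fun i => if i ≤ n then w i else w' (i - n) := ⟨_, rfl⟩
        have hwA : ∀ i, i ≤ n → w'' i = w i := by
          intro i hi; rw [hw'']; simp [hi]
        have hwB : ∀ i, w'' (n + i) = w' i := by
          intro i
          rcases Nat.eq_zero_or_pos i with rfl | hpos
          · rw [hw'']
            show (if n + 0 ≤ n then w (n + 0) else w' (n + 0 - n)) = w' 0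
            rw [if_pos (by omega), Nat.add_zero]
            exact hcomp.symm
          · rw [hw'']
            show (if n + i ≤ n then w (n + i) else w' (n + i - n)) = w' i
            rw [if_neg (by omega), show n + i - n = i by omega]
        have hset : Cyl n w ∩ shifts n ⁻¹' Cyl m w' = Cyl (n + m) w'' := by
          ext ω
          constructor
          · rintro ⟨h1, h2⟩ i hi
            by_cases hin : i ≤ n
            · rw [hwA i hin]; exact h1 i hin
            · have h6 := hwB (i - n)
              rw [show n + (i - n) = i by omega] at h6
              rw [h6]
              have h3 : ω (i - n + n) = w' (i - n) := h2 (i - n) (by omega)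
              rw [show i - n + n = i by omega] at h3
              exact h3
          · intro hω
            constructor
            · intro i hi
              rw [← hwA i hi]
              exact hω i (by omega)
            · intro i hi
              show ω (i + n) = w' i
              have := hω (n + i) (by omega)
              rw [hwB i] at this
              rw [show i + n = n + i by omega]
              exact this
        rw [hset, measure_cyl, measure_cyl, measure_cyl]
        have hw''0 : w'' 0 = w 0 := hwA 0 (Nat.zero_le n)
        have hprod : ∏ i ∈ Finset.range (n + m), M.p (w'' i) (w'' (i + 1))
            = (∏ i ∈ Finset.range n, M.p (w i) (w (i + 1)))
              * ∏ i ∈ Finset.range m, M.p (w' i) (w' (i + 1)) := by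
          rw [Finset.prod_range_add]
          congr 1
          · refine Finset.prod_congr rfl fun i hi => ?_
            rw [Finset.mem_range] at hi
            rw [hwA i (by omega), hwA (i + 1) (by omega)]
          · refine Finset.prod_congr rfl fun i hi => ?_
            rw [show n + i + 1 = n + (i + 1) by omega, hwB i, hwB (i + 1)]
        rw [hw''0, hprod, if_pos hcomp]
        by_cases hz : w 0 = z
        · rw [if_pos hz, if_pos hz,
            ENNReal.ofReal_mul (Finset.prod_nonneg fun i _ => M.p_nonneg _ _)]
        · rw [if_neg hz, if_neg hz]
          simp
      · have hset : Cyl n w ∩ shifts n ⁻¹' Cyl m w' = ∅ := by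
          ext ω
          simp only [mem_inter_iff, mem_empty_iff_false, iff_false]
          rintro ⟨h1, h2⟩
          have h4 : ω (0 + n) = w' 0 := h2 0 (Nat.zero_le m)
          rw [Nat.zero_add] at h4
          exact hcomp (h4.symm.trans (h1 n le_rfl))
        rw [hset, measure_cyl M (w n) m w', if_neg hcomp]
        simp
    · rw [hmap univ MeasurableSet.univ, Measure.smul_apply, smul_eq_mul, measure_univ,
        mul_one, preimage_univ, inter_univ]
  rw [← hmap B hB, hext, Measure.smul_apply, smul_eq_mul]

lemma tail_shifts {A : Set (ℕ → V)} (hA : IsTailEvent A) (n : ℕ) : shifts n ⁻¹' A = A := by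
  induction n with
  | zero =>
    have h : shifts (V := V) 0 = id := by funext ω k; rfl
    rw [h, preimage_id]
  | succ n ih =>
    have hcomp : shifts (V := V) (n + 1) = (fun ω : ℕ → V => fun k => ω (k + 1)) ∘ shifts n := by
      funext ω k
      show ω (k + (n + 1)) = ω (k + 1 + n)
      congr 1
      omega
    rw [hcomp, preimage_comp, hA.2, ih]

lemma toReal_prob_le_one {μ : Measure (ℕ → V)} [IsProbabilityMeasure μ] (A : Set (ℕ → V)) :
    (μ A).toReal ≤ 1 := by
  have h1 : (μ A).toReal ≤ (μ univ).toReal :=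
    ENNReal.toReal_mono (measure_ne_top _ _) (measure_mono (subset_univ A))
  rwa [measure_univ, ENNReal.toReal_one] at h1

lemma harmonic_of_tail (M : MarkovChain V) (hV : ∀ s : Set V, MeasurableSet s)
    {A : Set (ℕ → V)} (hA : IsTailEvent A) :
    ∀ z, HasSum (fun y => M.p z y * (M.μ y A).toReal) ((M.μ z A).toReal) := by
  intro z
  haveI := M.μ_prob z
  obtain ⟨c, hc⟩ : ∃ c : V → ℕ → V, c = fun y k => if k = 0 then z else y := ⟨_, rfl⟩
  have hcyl1 : ∀ y, M.μ z (Cyl 1 (c y)) = ENNReal.ofReal (M.p z y) := by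
    intro y
    rw [measure_cyl, Finset.prod_range_one, hc]
    simp
  have hμA : M.μ z A = ∑' y, ENNReal.ofReal (M.p z y) * M.μ y A := by
    have hz0 : M.μ z {ω : ℕ → V | ω 0 = z}ᶜ = 0 := by
      have he : {ω : ℕ → V | ω 0 = z} = Cyl 0 (fun _ => z) := by
        ext ω
        simp [Cyl, Nat.le_zero]
      rw [prob_compl_eq_zero_iff (by rw [he]; exact measurableSet_cyl hV 0 _), he, measure_cyl]
      simp
    have hcov : A ∩ {ω : ℕ → V | ω 0 = z} = ⋃ y : V, (Cyl 1 (c y) ∩ A) := by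
      ext ω
      simp only [mem_inter_iff, mem_iUnion, mem_setOf_eq]
      constructor
      · rintro ⟨hωA, hω0⟩
        refine ⟨ω 1, ?_, hωA⟩
        intro i hi
        have hi2 : i = 0 ∨ i = 1 := by omega
        rcases hi2 with rfl | rfl
        · rw [hc]; simpa using hω0
        · rw [hc]; simp
      · rintro ⟨y, hcy, hωA⟩
        refine ⟨hωA, ?_⟩
        have := hcy 0 (Nat.zero_le 1)
        rw [hc] at this
        simpa using this
    have hdisj : Pairwise (Function.onFun Disjoint fun y => Cyl 1 (c y) ∩ A) := by
      intro y y' hyy'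
      rw [Function.onFun]
      refine Set.disjoint_left.mpr ?_
      rintro ω ⟨h1, _⟩ ⟨h2, _⟩
      have e1 := h1 1 le_rfl
      have e2 := h2 1 le_rfl
      rw [hc] at e1 e2
      simp only [one_ne_zero, if_neg] at e1 e2
      exact hyy' (e1.symm.trans e2)
    calc M.μ z A = M.μ z (A ∩ {ω : ℕ → V | ω 0 = z}) := (measure_inter_conull hz0).symm
      _ = M.μ z (⋃ y : V, (Cyl 1 (c y) ∩ A)) := by rw [hcov]
      _ = ∑' y, M.μ z (Cyl 1 (c y) ∩ A) :=
          measure_iUnion hdisj fun y => (measurableSet_cyl hV 1 (c y)).inter hA.1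
      _ = ∑' y, ENNReal.ofReal (M.p z y) * M.μ y A := by
          refine tsum_congr fun y => ?_
          rw [← tail_shifts hA 1, markov_key M hV z 1 (c y) hA.1, tail_shifts hA 1, hcyl1 y]
          congr 1
          rw [hc]
          simp
  have hsummable : Summable (fun y => M.p z y * (M.μ y A).toReal) := by
    refine Summable.of_nonneg_of_le
      (fun y => mul_nonneg (M.p_nonneg z y) ENNReal.toReal_nonneg)
      (fun y => ?_) (M.p_row_sum z).summable
    haveI := M.μ_prob y
    calc M.p z y * (M.μ y A).toReal ≤ M.p z y * 1 :=
          mul_le_mul_of_nonneg_left (toReal_prob_le_one A) (M.p_nonneg z y)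
      _ = M.p z y := mul_one _
  have htsum : ∑' y, M.p z y * (M.μ y A).toReal = (M.μ z A).toReal := by
    have hofReal : ENNReal.ofReal (∑' y, M.p z y * (M.μ y A).toReal)
        = ENNReal.ofReal ((M.μ z A).toReal) := by
      rw [ENNReal.ofReal_tsum_of_nonneg
        (fun y => mul_nonneg (M.p_nonneg z y) ENNReal.toReal_nonneg) hsummable,
        ENNReal.ofReal_toReal (measure_ne_top _ _), hμA]
      refine tsum_congr fun y => ?_
      haveI := M.μ_prob y
      rw [ENNReal.ofReal_mul (M.p_nonneg z y), ENNReal.ofReal_toReal (measure_ne_top _ _)]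
    have := (ENNReal.ofReal_eq_ofReal_iff
      (tsum_nonneg fun y => mul_nonneg (M.p_nonneg z y) ENNReal.toReal_nonneg)
      ENNReal.toReal_nonneg).mp hofReal
    exact this
  rw [← htsum]
  exact hsummable.hasSum

lemma sharp_of_tail (M : MarkovChain V) (hV : ∀ s : Set V, MeasurableSet s)
    {A : Set (ℕ → V)} (hA : IsTailEvent A) (z : V) :
    ∀ᵐ ω ∂ M.μ z, Tendsto (fun n => (M.μ (ω n) A).toReal) atTop (𝓝 0)
      ∨ Tendsto (fun n => (M.μ (ω n) A).toReal) atTop (𝓝 1) := by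
  haveI := M.μ_prob z
  haveI msc : MeasurableSingletonClass V := ⟨fun x => hV {x}⟩
  have hFin : ∀ (k : ℕ) (s : Set (Fin k → V)), MeasurableSet s := fun k s =>
    (Set.to_countable s).measurableSet
  obtain ⟨R, hR⟩ : ∃ R : ∀ n : ℕ, (ℕ → V) → (Fin (n + 1) → V),
      R = fun n ω i => ω i := ⟨_, rfl⟩
  have hRmeas : ∀ n, Measurable (R n) := by
    intro n
    rw [hR]
    show Measurable fun ω : ℕ → V => fun i : Fin (n + 1) => ω i.val
    exact measurable_pi_lambda _ fun i => measurable_pi_apply i.val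
  have hRpre : ∀ (n : ℕ) (B : Set (Fin (n + 1) → V)) (ω : ℕ → V),
      ω ∈ R n ⁻¹' B ↔ (fun i : Fin (n + 1) => ω i) ∈ B := by
    intro n B ω; rw [hR]; exact Iff.rfl
  set ℱ : Filtration ℕ (inferInstance : MeasurableSpace (ℕ → V)) :=
    { seq := fun n => MeasurableSpace.comap (R n) inferInstance
      mono' := by
        intro n m hnm s hs
        obtain ⟨B, hB, rfl⟩ := hs
        refine ⟨(fun b : Fin (m + 1) → V => fun i : Fin (n + 1) =>
          b ⟨i.val, by omega⟩) ⁻¹' B, hFin _ _, ?_⟩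
        rw [← preimage_comp, hR]
        rfl
      le' := fun n s hs => by
        obtain ⟨B, hB, rfl⟩ := hs
        exact (hRmeas n) hB } with hℱ
  have hevalF : ∀ n : ℕ, @Measurable _ _ (ℱ n) _ (fun ω : ℕ → V => ω n) := by
    intro n B hB
    refine ⟨(fun b : Fin (n + 1) → V => b ⟨n, Nat.lt_succ_self n⟩) ⁻¹' B, hFin _ _, ?_⟩
    rw [← preimage_comp, hR]
    rfl
  have hsup : (⨆ n, (ℱ n : MeasurableSpace (ℕ → V))) = (inferInstance : MeasurableSpace (ℕ → V)) := by
    refine le_antisymm (iSup_le fun n => ℱ.le n) ?_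
    have hmeas : @Measurable _ _ (⨆ n, (ℱ n : MeasurableSpace (ℕ → V))) MeasurableSpace.pi
        (id : (ℕ → V) → (ℕ → V)) := by
      letI mS : MeasurableSpace (ℕ → V) := ⨆ n, (ℱ n : MeasurableSpace (ℕ → V))
      apply measurable_pi_iff.mpr
      intro i
      exact (hevalF i).mono (le_iSup (fun n => (ℱ n : MeasurableSpace (ℕ → V))) i) le_rfl
    intro s hs
    have := hmeas hs
    simpa using this
  have hsmeas : Measurable fun v : V => (M.μ v A).toReal := fun s _ => hV _
  obtain ⟨g, hg⟩ : ∃ g : (ℕ → V) → ℝ, g = A.indicator (1 : (ℕ → V) → ℝ) := ⟨_, rfl⟩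
  have hgint : Integrable g (M.μ z) := by
    rw [hg]; exact (integrable_const (1 : ℝ)).indicator hA.1
  have hgsm : StronglyMeasurable[⨆ n, (ℱ n : MeasurableSpace (ℕ → V))] g := by
    rw [hsup, hg]
    exact stronglyMeasurable_const.indicator hA.1
  -- the candidate conditional expectations
  have hfmeas : ∀ n : ℕ, Measurable fun ω : ℕ → V => (M.μ (ω n) A).toReal := fun n =>
    hsmeas.comp (measurable_pi_apply n)
  have hfint : ∀ n, Integrable (fun ω : ℕ → V => (M.μ (ω n) A).toReal) (M.μ z) := by
    intro n
    refine Integrable.mono' (integrable_const (1 : ℝ)) (hfmeas n).aestronglyMeasurable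
      (ae_of_all _ fun ω => ?_)
    haveI := M.μ_prob (ω n)
    rw [Real.norm_eq_abs, abs_of_nonneg ENNReal.toReal_nonneg]
    exact toReal_prob_le_one A
  have hcond : ∀ n, (fun ω : ℕ → V => (M.μ (ω n) A).toReal) =ᵐ[M.μ z] (M.μ z)[g | ℱ n] := by
    intro n
    refine ae_eq_condExp_of_forall_setIntegral_eq (ℱ.le n) hgint
      (fun s _ _ => (hfint n).integrableOn) ?_ ?_
    · -- set integral equality
      rintro s ⟨B, hB, rfl⟩ -
      obtain ⟨e, he⟩ : ∃ e : (Fin (n + 1) → V) → (ℕ → V),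
          e = fun b k => if h : k < n + 1 then b ⟨k, h⟩ else b ⟨n, Nat.lt_succ_self n⟩ :=
        ⟨_, rfl⟩
      have hcylb : ∀ b : Fin (n + 1) → V, R n ⁻¹' {b} = Cyl n (e b) := by
        intro b
        ext ω
        rw [hRpre n {b} ω]
        simp only [mem_singleton_iff]
        constructor
        · intro hfun k hk
          rw [he]
          show ω k = if h : k < n + 1 then b ⟨k, h⟩ else b ⟨n, Nat.lt_succ_self n⟩
          rw [dif_pos (Nat.lt_succ_of_le hk)]
          exact congrFun hfun ⟨k, Nat.lt_succ_of_le hk⟩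
        · intro hω
          funext i
          have := hω i.val (Nat.le_of_lt_succ i.isLt)
          rw [he] at this
          show ω i.val = b i
          rw [this]
          show (if h : i.val < n + 1 then b ⟨i.val, h⟩ else _) = b i
          rw [dif_pos i.isLt]
      have hend : ∀ b : Fin (n + 1) → V, e b n = b ⟨n, Nat.lt_succ_self n⟩ := by
        intro b
        rw [he]
        show (if h : n < n + 1 then b ⟨n, h⟩ else _) = _
        rw [dif_pos (Nat.lt_succ_self n)]
      have hpre : R n ⁻¹' B = ⋃ b : B, R n ⁻¹' {(b : Fin (n + 1) → V)} := by
        ext ω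
        simp only [mem_iUnion, mem_preimage, mem_singleton_iff]
        constructor
        · intro h
          exact ⟨⟨R n ω, h⟩, rfl⟩
        · rintro ⟨b, hb⟩
          rw [hb]
          exact b.2
      have hdisj : Pairwise (Function.onFun Disjoint fun b : B => R n ⁻¹' {(b : Fin (n + 1) → V)}) := by
        intro b b' hbb'
        rw [Function.onFun]
        refine Set.disjoint_left.mpr ?_
        rintro ω h1 h2
        simp only [mem_preimage, mem_singleton_iff] at h1 h2
        exact hbb' (Subtype.ext (h1.symm.trans h2))
      have hmeasb : ∀ b : B, MeasurableSet (R n ⁻¹' {(b : Fin (n + 1) → V)}) :=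
        fun b => (hRmeas n) (hFin _ _)
      have hmul : ∀ b : B, M.μ z (A ∩ R n ⁻¹' {(b : Fin (n + 1) → V)})
          = M.μ z (R n ⁻¹' {(b : Fin (n + 1) → V)}) * M.μ (b.val ⟨n, Nat.lt_succ_self n⟩) A := by
        intro b
        rw [hcylb, inter_comm, ← tail_shifts hA n]
        rw [markov_key M hV z n (e b.val) hA.1, tail_shifts hA n, hend]
      rw [hpre]
      rw [integral_iUnion hmeasb hdisj (hfint n).integrableOn,
        integral_iUnion hmeasb hdisj hgint.integrableOn]
      refine tsum_congr fun b => ?_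
      have hL : ∫ ω in R n ⁻¹' {(b : Fin (n + 1) → V)}, (M.μ (ω n) A).toReal ∂(M.μ z)
          = (M.μ z (R n ⁻¹' {(b : Fin (n + 1) → V)})).toReal
              * (M.μ (b.val ⟨n, Nat.lt_succ_self n⟩) A).toReal := by
        rw [setIntegral_congr_fun (hmeasb b)
          (show EqOn (fun ω : ℕ → V => (M.μ (ω n) A).toReal)
            (fun _ => (M.μ (b.val ⟨n, Nat.lt_succ_self n⟩) A).toReal)
            (R n ⁻¹' {(b : Fin (n + 1) → V)}) from ?_)]
        · rw [setIntegral_const, smul_eq_mul, Measure.real_def]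
        · intro ω hω
          have hωn : ω n = b.val ⟨n, Nat.lt_succ_self n⟩ := by
            rw [hcylb] at hω
            rw [hω n le_rfl, hend]
          show (M.μ (ω n) A).toReal = _
          rw [hωn]
      have hRg : ∫ ω in R n ⁻¹' {(b : Fin (n + 1) → V)}, g ω ∂(M.μ z)
          = (M.μ z (A ∩ R n ⁻¹' {(b : Fin (n + 1) → V)})).toReal := by
        rw [hg, integral_indicator_one hA.1, Measure.real_def, Measure.restrict_apply hA.1]
      rw [hL, hRg, hmul b, ENNReal.toReal_mul]
    · -- strong measurability wrt ℱ n
      have hm : @Measurable _ _ (ℱ n) _ (fun ω : ℕ → V => (M.μ (ω n) A).toReal) :=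
        hsmeas.comp (hevalF n)
      exact StronglyMeasurable.aestronglyMeasurable hm.stronglyMeasurable
  have hlevy := hgint.tendsto_ae_condExp hgsm
  have hall : ∀ᵐ ω ∂ M.μ z, ∀ n, (M.μ (ω n) A).toReal = ((M.μ z)[g | ℱ n]) ω :=
    ae_all_iff.mpr fun n => hcond n
  filter_upwards [hall, hlevy] with ω h1 h2
  have h3 : Tendsto (fun n => (M.μ (ω n) A).toReal) atTop (𝓝 (g ω)) := by
    have heq : (fun n => ((M.μ z)[g | ℱ n]) ω) = fun n => (M.μ (ω n) A).toReal :=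
      funext fun n => (h1 n).symm
    rwa [heq] at h2
  by_cases hω : ω ∈ A
  · right
    have : g ω = 1 := by rw [hg]; simp [indicator_of_mem hω]
    rwa [this] at h3
  · left
    have : g ω = 0 := by rw [hg]; simp [indicator_of_notMem hω]
    rwa [this] at h3

end AuxLemmas

/-- For a tail event `A`, the function `z ↦ μ_z(A)` is a sharp
harmonic function. -/
theorem tail_event_prob_sharp (M : MarkovChain V) (A : Set (ℕ → V))
    (hA : IsTailEvent A) :
    IsSharp M (fun z => (M.μ z A).toReal) := by
  have hV : ∀ s : Set V, MeasurableSet s := mc_discrete M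
  refine ⟨harmonic_of_tail M hV hA, fun x => ⟨ENNReal.toReal_nonneg, ?_⟩,
    fun z => sharp_of_tail M hV hA z⟩
  haveI := M.μ_prob x
  exact toReal_prob_le_one A
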